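/- Let p > 2, Λ > 0, and define the Talenti bubbles V_t(s) := β·(cosh(α(s−t)))^{−2/(p−2)} with α := ((p−2)/2)·√Λ and β := (pΛ/2)^{1/(p−2)}. Then for all t₁, t₂ ∈ ℝ with t₂ > t₁ one has ∫_ℝ V_{t₁}(s)^{p−1}·V_{t₂}'(s) ds > 0, for t₂ < t₁ the integral is negative, and for t₂ = t₁ the integral equals 0. -/

import Mathlib

open MeasureTheory Set

/-- The explicit integrand `c · cosh(α(s-t₁))^(r-2) · cosh(α(s-t₂))^(r-1) · sinh(α(s-t₂))`. -/
noncomputable def Gb (c α r t₁ t₂ : ℝ) : ℝ → ℝ := fun s =>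
  c * (Real.cosh (α * (s - t₁)) ^ (r - 2) *
    (Real.cosh (α * (s - t₂)) ^ (r - 1) * Real.sinh (α * (s - t₂))))

lemma Gb_continuous (c α r t₁ t₂ : ℝ) : Continuous (Gb c α r t₁ t₂) := by
  have h1 : Continuous fun s : ℝ => Real.cosh (α * (s - t₁)) ^ (r - 2) := by
    apply (Real.continuous_cosh.comp (by fun_prop)).rpow_const
    exact fun x => Or.inl (Real.cosh_pos _).ne'
  have h2 : Continuous fun s : ℝ => Real.cosh (α * (s - t₂)) ^ (r - 1) := by
    apply (Real.continuous_cosh.comp (by fun_prop)).rpow_const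
    exact fun x => Or.inl (Real.cosh_pos _).ne'
  exact continuous_const.mul (h1.mul (h2.mul (Real.continuous_sinh.comp (by fun_prop))))

/-- `∫ f(a - s) ds = ∫ f` over the real line. -/
lemma integral_comp_const_sub (G : ℝ → ℝ) (a : ℝ) :
    (∫ s : ℝ, G (a - s)) = ∫ s : ℝ, G s := by
  calc (∫ s : ℝ, G (a - s)) = ∫ s : ℝ, G (a + -s) := by simp_rw [sub_eq_add_neg]
    _ = ∫ s : ℝ, G (a + s) := integral_neg_eq_self (fun s => G (a + s)) volume
    _ = ∫ s : ℝ, G s := integral_add_left_eq_self (fun s => G s) a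

lemma exp_abs_le_two_cosh (x : ℝ) : Real.exp |x| ≤ 2 * Real.cosh x := by
  rw [Real.cosh_eq]
  rcases abs_cases x with ⟨h, _⟩ | ⟨h, _⟩ <;> rw [h] <;>
    nlinarith [Real.exp_pos x, Real.exp_pos (-x), (Real.exp_pos x).le, (Real.exp_pos (-x)).le]

lemma integrable_exp_mul_abs {d : ℝ} (hd : d < 0) (t : ℝ) :
    Integrable (fun s : ℝ => Real.exp (d * |s - t|)) := by
  have hIoi : IntegrableOn (fun s : ℝ => Real.exp (d * |s|)) (Ioi (0:ℝ)) := by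
    have h0 : IntegrableOn (fun s : ℝ => Real.exp (-(-d) * s)) (Ioi (0:ℝ)) :=
      exp_neg_integrableOn_Ioi 0 (neg_pos.mpr hd)
    refine h0.congr_fun (fun x hx => ?_) measurableSet_Ioi
    rw [abs_of_pos (by exact hx)]; ring_nf
  have hIic : IntegrableOn (fun s : ℝ => Real.exp (d * |s|)) (Iic (0:ℝ)) := by
    have m : MeasurableEmbedding fun x : ℝ => -x :=
      (Homeomorph.neg ℝ).isClosedEmbedding.measurableEmbedding
    rw [← Measure.map_neg_eq_self (volume : Measure ℝ)]
    rw [m.integrableOn_map_iff]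
    simp_rw [Function.comp_def, abs_neg, neg_preimage, neg_Iic, neg_zero]
    exact (integrableOn_Ici_iff_integrableOn_Ioi).mpr hIoi
  have hint : Integrable (fun s : ℝ => Real.exp (d * |s|)) := by
    rw [← integrableOn_univ, ← Iic_union_Ioi (a := (0:ℝ))]
    exact hIic.union hIoi
  exact hint.comp_sub_right t

lemma Gb_bound {c α r : ℝ} (hα : 0 < α) (hr : r < 0) (t₁ t₂ s : ℝ) :
    ‖Gb c α r t₁ t₂ s‖ ≤ (|c| * 2 ^ (-r)) * Real.exp ((r * α) * |s - t₂|) := by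
  have hca : (0:ℝ) < Real.cosh (α * (s - t₁)) := Real.cosh_pos _
  have hcb : (0:ℝ) < Real.cosh (α * (s - t₂)) := Real.cosh_pos _
  have h1 : Real.cosh (α * (s - t₁)) ^ (r - 2) ≤ 1 :=
    Real.rpow_le_one_of_one_le_of_nonpos (Real.one_le_cosh _) (by linarith)
  have h2 : |Real.sinh (α * (s - t₂))| ≤ Real.cosh (α * (s - t₂)) := by
    rw [Real.abs_sinh]
    calc Real.sinh |α * (s - t₂)| ≤ Real.cosh |α * (s - t₂)| := (Real.sinh_lt_cosh _).le
      _ = Real.cosh (α * (s - t₂)) := Real.cosh_abs _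
  have hstep1 : ‖Gb c α r t₁ t₂ s‖ ≤ |c| * Real.cosh (α * (s - t₂)) ^ r := by
    have expand : ‖Gb c α r t₁ t₂ s‖ = |c| * (Real.cosh (α * (s - t₁)) ^ (r - 2) *
        (Real.cosh (α * (s - t₂)) ^ (r - 1) * |Real.sinh (α * (s - t₂))|)) := by
      simp only [Gb, Real.norm_eq_abs, abs_mul,
        abs_of_pos (Real.rpow_pos_of_pos hca (r - 2)),
        abs_of_pos (Real.rpow_pos_of_pos hcb (r - 1))]
    rw [expand]
    have key : Real.cosh (α * (s - t₁)) ^ (r - 2) *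
        (Real.cosh (α * (s - t₂)) ^ (r - 1) * |Real.sinh (α * (s - t₂))|)
        ≤ Real.cosh (α * (s - t₂)) ^ r := by
      have h3 : Real.cosh (α * (s - t₂)) ^ (r - 1) * |Real.sinh (α * (s - t₂))|
          ≤ Real.cosh (α * (s - t₂)) ^ (r - 1) * Real.cosh (α * (s - t₂)) :=
        mul_le_mul_of_nonneg_left h2 (Real.rpow_pos_of_pos hcb _).le
      have h4 : Real.cosh (α * (s - t₂)) ^ (r - 1) * Real.cosh (α * (s - t₂))
          = Real.cosh (α * (s - t₂)) ^ r := by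
        rw [← Real.rpow_add_one hcb.ne' (r - 1)]; ring_nf
      calc Real.cosh (α * (s - t₁)) ^ (r - 2) *
          (Real.cosh (α * (s - t₂)) ^ (r - 1) * |Real.sinh (α * (s - t₂))|)
          ≤ 1 * (Real.cosh (α * (s - t₂)) ^ (r - 1) * Real.cosh (α * (s - t₂))) := by
            apply mul_le_mul h1 h3 (by positivity) (by norm_num)
        _ = Real.cosh (α * (s - t₂)) ^ r := by rw [one_mul, h4]
    exact mul_le_mul_of_nonneg_left key (abs_nonneg c)
  have hstep2 : Real.cosh (α * (s - t₂)) ^ r ≤ 2 ^ (-r) * Real.exp ((r * α) * |s - t₂|) := by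
    have hlow : Real.exp |α * (s - t₂)| / 2 ≤ Real.cosh (α * (s - t₂)) := by
      have := exp_abs_le_two_cosh (α * (s - t₂)); linarith
    have hmono : Real.cosh (α * (s - t₂)) ^ r ≤ (Real.exp |α * (s - t₂)| / 2) ^ r :=
      Real.rpow_le_rpow_of_nonpos (by positivity) hlow hr.le
    have hval : (Real.exp |α * (s - t₂)| / 2) ^ r
        = 2 ^ (-r) * Real.exp ((r * α) * |s - t₂|) := by
      rw [Real.div_rpow (Real.exp_pos _).le (by norm_num), ← Real.exp_mul,
        Real.rpow_neg (by norm_num : (0:ℝ) ≤ 2), div_eq_mul_inv,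
        abs_mul, abs_of_pos hα]
      ring_nf
    rw [hval] at hmono; exact hmono
  calc ‖Gb c α r t₁ t₂ s‖ ≤ |c| * Real.cosh (α * (s - t₂)) ^ r := hstep1
    _ ≤ |c| * (2 ^ (-r) * Real.exp ((r * α) * |s - t₂|)) :=
        mul_le_mul_of_nonneg_left hstep2 (abs_nonneg c)
    _ = (|c| * 2 ^ (-r)) * Real.exp ((r * α) * |s - t₂|) := by ring

lemma Gb_integrable {α r : ℝ} (c : ℝ) (hα : 0 < α) (hr : r < 0) (t₁ t₂ : ℝ) :
    Integrable (Gb c α r t₁ t₂) := by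
  have hd : r * α < 0 := mul_neg_of_neg_of_pos hr hα
  refine Integrable.mono' (((integrable_exp_mul_abs hd t₂)).const_mul (|c| * 2 ^ (-r)))
    (Gb_continuous c α r t₁ t₂).aestronglyMeasurable ?_
  filter_upwards with s
  exact Gb_bound hα hr t₁ t₂ s

lemma Gb_key {c α r : ℝ} (hc : c < 0) (hα : 0 < α) (hr : r < 0) {t₁ t₂ : ℝ} (h : t₁ < t₂) :
    0 < ∫ s : ℝ, Gb c α r t₁ t₂ s := by
  have refl_eq : ∀ s : ℝ, Gb c α r t₁ t₂ (t₁ + t₂ - s) = Gb (-c) α r t₂ t₁ s := by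
    intro s
    simp only [Gb]
    rw [show α * (t₁ + t₂ - s - t₁) = -(α * (s - t₂)) by ring,
      show α * (t₁ + t₂ - s - t₂) = -(α * (s - t₁)) by ring,
      Real.cosh_neg, Real.cosh_neg, Real.sinh_neg]
    ring
  have int1 := Gb_integrable c hα hr t₁ t₂
  have int2 := Gb_integrable (-c) hα hr t₂ t₁
  have trans_eq : (∫ s : ℝ, Gb (-c) α r t₂ t₁ s) = ∫ s : ℝ, Gb c α r t₁ t₂ s := by
    simp_rw [← refl_eq]
    exact integral_comp_const_sub (Gb c α r t₁ t₂) (t₁ + t₂)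
  have pos : ∀ s : ℝ, 0 < Gb c α r t₁ t₂ s + Gb (-c) α r t₂ t₁ s := by
    intro s
    have hca : (0:ℝ) < Real.cosh (α * (s - t₁)) := Real.cosh_pos _
    have hcb : (0:ℝ) < Real.cosh (α * (s - t₂)) := Real.cosh_pos _
    have e1 : Real.cosh (α * (s - t₁)) ^ (r - 1)
        = Real.cosh (α * (s - t₁)) ^ (r - 2) * Real.cosh (α * (s - t₁)) := by
      rw [show r - 1 = r - 2 + 1 by ring, Real.rpow_add_one hca.ne' (r - 2)]
    have e2 : Real.cosh (α * (s - t₂)) ^ (r - 1)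
        = Real.cosh (α * (s - t₂)) ^ (r - 2) * Real.cosh (α * (s - t₂)) := by
      rw [show r - 1 = r - 2 + 1 by ring, Real.rpow_add_one hcb.ne' (r - 2)]
    have expand : Gb c α r t₁ t₂ s + Gb (-c) α r t₂ t₁ s
        = (c * (Real.cosh (α * (s - t₁)) ^ (r - 2) * Real.cosh (α * (s - t₂)) ^ (r - 2))) *
          (Real.cosh (α * (s - t₂)) * Real.sinh (α * (s - t₂))
            - Real.cosh (α * (s - t₁)) * Real.sinh (α * (s - t₁))) := by
      simp only [Gb]
      rw [e1, e2]
      ring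
    have hba : α * (s - t₂) < α * (s - t₁) := by nlinarith
    have hsinh : Real.cosh (α * (s - t₂)) * Real.sinh (α * (s - t₂))
        < Real.cosh (α * (s - t₁)) * Real.sinh (α * (s - t₁)) := by
      have h2 : Real.sinh (2 * (α * (s - t₂))) < Real.sinh (2 * (α * (s - t₁))) :=
        Real.sinh_lt_sinh.mpr (by linarith)
      rw [Real.sinh_two_mul, Real.sinh_two_mul] at h2
      nlinarith
    have hfac : c * (Real.cosh (α * (s - t₁)) ^ (r - 2) * Real.cosh (α * (s - t₂)) ^ (r - 2)) < 0 :=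
      mul_neg_of_neg_of_pos hc (by positivity)
    rw [expand]
    exact mul_pos_of_neg_of_neg hfac (by linarith)
  have main : 0 < ∫ s : ℝ, (Gb c α r t₁ t₂ s + Gb (-c) α r t₂ t₁ s) := by
    refine (integral_pos_iff_support_of_nonneg (fun s => (pos s).le) (int1.add int2)).mpr ?_
    have hsupp : Function.support (fun s => Gb c α r t₁ t₂ s + Gb (-c) α r t₂ t₁ s) = Set.univ :=
      Set.eq_univ_of_forall fun s => (pos s).ne'
    rw [hsupp]
    simp
  rw [integral_add int1 int2, trans_eq] at main
  linarith

/-- Sign property of the interaction integral `∫ V_{t₁}^{p-1} V_{t₂}'`: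
it is positive for `t₂ > t₁`, negative for `t₂ < t₁`, and zero for `t₂ = t₁`. -/
theorem stmt_10 (p Λ α β : ℝ) (hp : 2 < p) (hΛ : 0 < Λ)
    (hα : α = (p - 2) / 2 * Real.sqrt Λ) (hβ : β = (p * Λ / 2) ^ ((1 : ℝ) / (p - 2)))
    (V : ℝ → ℝ → ℝ)
    (hV : ∀ t s, V t s = β * Real.cosh (α * (s - t)) ^ (-2 / (p - 2) : ℝ)) :
    ∀ t₁ t₂ : ℝ,
      (t₁ < t₂ → 0 < ∫ s : ℝ, V t₁ s ^ (p - 1) * deriv (V t₂) s) ∧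
      (t₂ < t₁ → (∫ s : ℝ, V t₁ s ^ (p - 1) * deriv (V t₂) s) < 0) ∧
      (t₂ = t₁ → (∫ s : ℝ, V t₁ s ^ (p - 1) * deriv (V t₂) s) = 0) := by
  have hp2 : (0:ℝ) < p - 2 := by linarith
  have hαpos : 0 < α := by
    rw [hα]
    exact mul_pos (by linarith) (Real.sqrt_pos.mpr hΛ)
  have hβpos : 0 < β := by
    rw [hβ]
    exact Real.rpow_pos_of_pos (by nlinarith) _
  obtain ⟨r, hrdef⟩ : ∃ r : ℝ, r = -2 / (p - 2) := ⟨_, rfl⟩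
  rw [show (-2 / (p - 2) : ℝ) = r from hrdef.symm] at hV
  have hr : r < 0 := by rw [hrdef]; exact div_neg_of_neg_of_pos (by norm_num) hp2
  have hrp : r * (p - 1) = r - 2 := by
    rw [hrdef]
    field_simp
    ring
  set cv : ℝ := β ^ (p - 1) * β * r * α with hcv
  have hcneg : cv < 0 :=
    mul_neg_of_neg_of_pos
      (mul_neg_of_pos_of_neg (by positivity) hr) hαpos
  have hderiv : ∀ t s : ℝ, HasDerivAt (V t)
      (β * r * Real.cosh (α * (s - t)) ^ (r - 1) * Real.sinh (α * (s - t)) * α) s := by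
    intro t s
    have hVt : V t = fun s => β * Real.cosh (α * (s - t)) ^ r := funext fun s => hV t s
    rw [hVt]
    have h1 : HasDerivAt (fun s : ℝ => α * (s - t)) α s := by
      simpa using ((hasDerivAt_id s).sub_const t).const_mul α
    have h2 : HasDerivAt (fun s : ℝ => Real.cosh (α * (s - t)))
        (Real.sinh (α * (s - t)) * α) s := by
      exact (Real.hasDerivAt_cosh (α * (s - t))).comp s h1
    have h3 := h2.rpow_const (p := r) (Or.inl (Real.cosh_pos _).ne')
    have h4 := h3.const_mul β
    refine h4.congr_deriv ?_
    ring
  have integrand_eq : ∀ u₁ u₂ s : ℝ,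
      V u₁ s ^ (p - 1) * deriv (V u₂) s = Gb cv α r u₁ u₂ s := by
    intro u₁ u₂ s
    rw [(hderiv u₂ s).deriv, hV u₁ s,
      Real.mul_rpow hβpos.le (Real.rpow_pos_of_pos (Real.cosh_pos _) r).le,
      ← Real.rpow_mul (Real.cosh_pos _).le, hrp]
    simp only [Gb, hcv]
    ring
  intro t₁ t₂
  refine ⟨fun h => ?_, fun h => ?_, fun h => ?_⟩ <;> simp only [integrand_eq]
  · exact Gb_key hcneg hαpos hr h
  · have key := Gb_key hcneg hαpos hr (t₁ := -t₁) (t₂ := -t₂) (by linarith)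
    have flip : ∀ s : ℝ, Gb cv α r t₁ t₂ (-s) = - Gb cv α r (-t₁) (-t₂) s := by
      intro s
      simp only [Gb]
      rw [show α * (-s - t₁) = -(α * (s - -t₁)) by ring,
        show α * (-s - t₂) = -(α * (s - -t₂)) by ring,
        Real.cosh_neg, Real.cosh_neg, Real.sinh_neg]
      ring
    have heq : (∫ s : ℝ, Gb cv α r t₁ t₂ s) = - ∫ s : ℝ, Gb cv α r (-t₁) (-t₂) s := by
      rw [← integral_neg_eq_self (Gb cv α r t₁ t₂) volume]
      simp_rw [flip]
      exact integral_neg _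
    rw [heq]
    linarith
  · subst h
    have odd : ∀ s : ℝ, Gb cv α r t₂ t₂ (t₂ + t₂ - s) = - Gb cv α r t₂ t₂ s := by
      intro s
      simp only [Gb]
      rw [show α * (t₂ + t₂ - s - t₂) = -(α * (s - t₂)) by ring,
        Real.cosh_neg, Real.sinh_neg]
      ring
    have hcs := integral_comp_const_sub (Gb cv α r t₂ t₂) (t₂ + t₂)
    simp_rw [odd, integral_neg] at hcs
    linarith
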